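/- With P^m_k as before (determinants of the matrix A^c_{m,m+1}(z,z̄) minus one column), the identity P^m_1(z, z̄) = z · P^{m−1}_1(z, z̄) − c · P^{m−1}_2(z, z̄) − |c|² · P^{m−2}_0(z, z̄) holds for all m ≥ 2. -/

import Mathlib

/-- The `m × (m+1)` banded Toeplitz matrix `A^c_{m,m+1}(z, z̄)`: main diagonal `z`,
superdiagonal `conj z`, second superdiagonal `conj c`, subdiagonal `c`. -/
noncomputable def Amc (c z : ℂ) (m : ℕ) : Matrix (Fin m) (Fin (m + 1)) ℂ :=
  Matrix.of fun i j =>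
    if (j : ℕ) = (i : ℕ) then z
    else if (j : ℕ) = (i : ℕ) + 1 then (starRingEnd ℂ) z
    else if (j : ℕ) = (i : ℕ) + 2 then (starRingEnd ℂ) c
    else if (i : ℕ) = (j : ℕ) + 1 then c
    else 0

/-- The generalized characteristic polynomial `P^m_k(z, z̄)`: the determinant of the
`m × m` matrix obtained from `A^c_{m,m+1}(z, z̄)` by deleting its `(m−k)`-th column
(columns indexed `0, …, m`), so that `P^m_k` is monic with leading term `z^{m−k} z̄^k`.
By convention `P^m_k = 0` when `m < 0`, `k < 0` or `k > m`. -/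
noncomputable def Pdet (c z : ℂ) (m k : ℤ) : ℂ :=
  if h : 0 ≤ m ∧ 0 ≤ k ∧ k ≤ m then
    ((Amc c z m.toNat).submatrix id
      (Fin.succAbove ⟨(m - k).toNat, by omega⟩)).det
  else 0


namespace Stmt9Aux

noncomputable def e (c z : ℂ) (i j : ℕ) : ℂ :=
  if j = i then z
  else if j = i + 1 then (starRingEnd ℂ) z
  else if j = i + 2 then (starRingEnd ℂ) c
  else if i = j + 1 then c
  else 0

noncomputable def B (c z : ℂ) (M D : ℕ) : Matrix (Fin M) (Fin M) ℂ :=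
  Matrix.of fun i j => e c z i (if (j : ℕ) < D then (j : ℕ) else (j : ℕ) + 1)

lemma B_apply (c z : ℂ) (M D : ℕ) (i j : Fin M) :
    B c z M D i j = e c z i (if (j : ℕ) < D then (j : ℕ) else (j : ℕ) + 1) := rfl

lemma e_shift (c z : ℂ) (i j : ℕ) : e c z (i+1) (j+1) = e c z i j := by
  unfold e; split_ifs <;> first | rfl | (exfalso; first | exact ‹False› | omega)

lemma e_eq (c z : ℂ) (i j i' j' : ℕ) (h1 : i = i' + 1) (h2 : j = j' + 1) :
    e c z i j = e c z i' j' := by rw [h1, h2]; exact e_shift c z i' j'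

lemma e_row0 (c z : ℂ) (j : ℕ) (h : 3 ≤ j) : e c z 0 j = 0 := by
  unfold e; split_ifs with h1 h2 h3 h4 <;> first | rfl | (exfalso; first | exact ‹False› | omega)

lemma succAbove_val {n : ℕ} (p : Fin (n+1)) (j : Fin n) :
    (p.succAbove j : ℕ) = if (j:ℕ) < (p:ℕ) then (j:ℕ) else (j:ℕ)+1 := by
  rw [Fin.succAbove]
  split_ifs with h1 h2 h2 <;> simp_all [Fin.lt_def]

lemma B_row0_eq_zero (c z : ℂ) (n D : ℕ) (j : Fin (n+1))
    (h : 3 ≤ (j:ℕ) ∨ (D ≤ (j:ℕ) ∧ 2 ≤ (j:ℕ))) :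
    B c z (n+1) D 0 j = 0 := by
  rw [B_apply]
  split_ifs with hj <;> apply e_row0 <;> omega

lemma e_shift_s (c z : ℂ) (i j s : ℕ) : e c z (i+s) (j+s) = e c z i j := by
  induction s with
  | zero => rfl
  | succ t ih => rw [show i+(t+1) = (i+t)+1 from rfl, show j+(t+1) = (j+t)+1 from rfl,
      e_shift, ih]

lemma e_eqs (c z : ℂ) (i j i' j' s : ℕ) (h1 : i = i' + s) (h2 : j = j' + s) :
    e c z i j = e c z i' j' := by rw [h1, h2, e_shift_s]

lemma e_col0 (c z : ℂ) (i : ℕ) : e c z (i+1) 0 = if i = 0 then c else 0 := by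
  unfold e; split_ifs <;> first | rfl | (exfalso; first | exact ‹False› | omega)

lemma e_col1 (c z : ℂ) (i : ℕ) : e c z (i+2) 1 = if i = 0 then c else 0 := by
  unfold e; split_ifs <;> first | rfl | (exfalso; first | exact ‹False› | omega)

lemma fin_val_zero0 (n : ℕ) : ((0 : Fin (n+1)) : ℕ) = 0 := by simp

lemma det_col0 {n : ℕ} (M : Matrix (Fin (n+1)) (Fin (n+1)) ℂ) (w : ℂ)
    (h : ∀ i : Fin (n+1), M i 0 = if (i:ℕ) = 0 then w else 0) :
    M.det = w * (M.submatrix Fin.succ Fin.succ).det := by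
  rw [Matrix.det_succ_column_zero, Fin.sum_univ_succ]
  have h0 : M 0 0 = w := by simpa using h 0
  have hz : ∀ i : Fin n, M i.succ 0 = 0 := fun i => by simpa using h i.succ
  simp [h0, hz, Fin.succAbove_zero]

lemma detB_D (c z : ℂ) (n : ℕ) :
    (B c z (n+2) 0).det =
      (starRingEnd ℂ) z * (B c z (n+1) 0).det - (starRingEnd ℂ) c * (B c z (n+1) 1).det := by
  rw [Matrix.det_succ_row_zero, Fin.sum_univ_succ, Fin.sum_univ_succ]
  have hz : ∀ i : Fin n, B c z (n+2) 0 0 i.succ.succ = 0 := fun i =>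
    B_row0_eq_zero _ _ _ _ _ (by simp [Fin.val_succ])
  have h00 : B c z (n+2) 0 0 0 = (starRingEnd ℂ) z := by
    simp [B_apply, e]
  have h01 : B c z (n+2) 0 0 (Fin.succ 0) = (starRingEnd ℂ) c := by
    simp [B_apply, e]
  have m0 : (B c z (n+2) 0).submatrix Fin.succ (Fin.succAbove 0) = B c z (n+1) 0 := by
    funext i j
    simp only [Matrix.submatrix_apply, B_apply, succAbove_val, Fin.val_succ, fin_val_zero0]
    split_ifs <;> exact e_eqs c z _ _ _ _ 1 (by omega) (by omega)
  have m1 : (B c z (n+2) 0).submatrix Fin.succ (Fin.succ 0).succAbove = B c z (n+1) 1 := by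
    funext i j
    simp only [Matrix.submatrix_apply, B_apply, succAbove_val, Fin.val_succ, fin_val_zero0]
    split_ifs <;> exact e_eqs c z _ _ _ _ 1 (by omega) (by omega)
  simp only [hz, mul_zero, zero_mul, Finset.sum_const_zero, add_zero, h00, h01, m0, m1,
    Fin.val_succ, fin_val_zero0]
  ring

lemma detB_C (c z : ℂ) (n : ℕ) :
    (B c z (n+2) 1).det =
      z * (B c z (n+1) 0).det - (starRingEnd ℂ) c * c * (B c z n 0).det := by
  rw [Matrix.det_succ_row_zero, Fin.sum_univ_succ, Fin.sum_univ_succ]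
  have hz : ∀ i : Fin n, B c z (n+2) 1 0 i.succ.succ = 0 := fun i =>
    B_row0_eq_zero _ _ _ _ _ (by simp only [Fin.val_succ]; omega)
  have h00 : B c z (n+2) 1 0 0 = z := by simp [B_apply, e]
  have h01 : B c z (n+2) 1 0 (Fin.succ 0) = (starRingEnd ℂ) c := by simp [B_apply, e]
  have m0 : (B c z (n+2) 1).submatrix Fin.succ (Fin.succAbove 0) = B c z (n+1) 0 := by
    funext i j
    simp only [Matrix.submatrix_apply, B_apply, succAbove_val, Fin.val_succ, fin_val_zero0]
    split_ifs <;> exact e_eqs c z _ _ _ _ 1 (by omega) (by omega)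
  have hcol : ∀ i : Fin (n+1),
      ((B c z (n+2) 1).submatrix Fin.succ (Fin.succ 0).succAbove) i 0
        = if (i:ℕ) = 0 then c else 0 := by
    intro i
    simp only [Matrix.submatrix_apply, B_apply, succAbove_val, Fin.val_succ, fin_val_zero0]
    norm_num
    rw [e_col0]; by_cases hi : i = 0 <;> simp [hi]
  have d1 : ((B c z (n+2) 1).submatrix Fin.succ (Fin.succ 0).succAbove).det
      = c * (B c z n 0).det := by
    rw [det_col0 _ c hcol]
    congr 1
    congr 1
    funext i j
    simp only [Matrix.submatrix_apply, B_apply, succAbove_val, Fin.val_succ, fin_val_zero0]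
    split_ifs <;> exact e_eqs c z _ _ _ _ 2 (by omega) (by omega)
  simp only [hz, mul_zero, zero_mul, Finset.sum_const_zero, add_zero, h00, h01, m0, d1,
    Fin.val_succ, fin_val_zero0]
  ring

lemma detB_B (c z : ℂ) (n : ℕ) :
    (B c z (n+2) 2).det =
      z * (B c z (n+1) 1).det - (starRingEnd ℂ) z * c * (B c z n 0).det := by
  rw [Matrix.det_succ_row_zero, Fin.sum_univ_succ, Fin.sum_univ_succ]
  have hz : ∀ i : Fin n, B c z (n+2) 2 0 i.succ.succ = 0 := fun i =>
    B_row0_eq_zero _ _ _ _ _ (by simp only [Fin.val_succ]; omega)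
  have h00 : B c z (n+2) 2 0 0 = z := by simp [B_apply, e]
  have h01 : B c z (n+2) 2 0 (Fin.succ 0) = (starRingEnd ℂ) z := by simp [B_apply, e]
  have m0 : (B c z (n+2) 2).submatrix Fin.succ (Fin.succAbove 0) = B c z (n+1) 1 := by
    funext i j
    simp only [Matrix.submatrix_apply, B_apply, succAbove_val, Fin.val_succ, fin_val_zero0]
    split_ifs <;> exact e_eqs c z _ _ _ _ 1 (by omega) (by omega)
  have hcol : ∀ i : Fin (n+1),
      ((B c z (n+2) 2).submatrix Fin.succ (Fin.succ 0).succAbove) i 0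
        = if (i:ℕ) = 0 then c else 0 := by
    intro i
    simp only [Matrix.submatrix_apply, B_apply, succAbove_val, Fin.val_succ, fin_val_zero0]
    norm_num
    rw [e_col0]; by_cases hi : i = 0 <;> simp [hi]
  have d1 : ((B c z (n+2) 2).submatrix Fin.succ (Fin.succ 0).succAbove).det
      = c * (B c z n 0).det := by
    rw [det_col0 _ c hcol]
    congr 1
    congr 1
    funext i j
    simp only [Matrix.submatrix_apply, B_apply, succAbove_val, Fin.val_succ, fin_val_zero0]
    split_ifs <;> exact e_eqs c z _ _ _ _ 2 (by omega) (by omega)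
  simp only [hz, mul_zero, zero_mul, Finset.sum_const_zero, add_zero, h00, h01, m0, d1,
    Fin.val_succ, fin_val_zero0]
  ring

lemma detB_A (c z : ℂ) (n D : ℕ) (hD : 3 ≤ D) :
    (B c z (n+3) D).det =
      z * (B c z (n+2) (D-1)).det - (starRingEnd ℂ) z * c * (B c z (n+1) (D-2)).det
        + (starRingEnd ℂ) c * c^2 * (B c z n (D-3)).det := by
  rw [Matrix.det_succ_row_zero, Fin.sum_univ_succ, Fin.sum_univ_succ, Fin.sum_univ_succ]
  have hz : ∀ i : Fin n, B c z (n+3) D 0 i.succ.succ.succ = 0 := fun i =>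
    B_row0_eq_zero _ _ _ _ _ (by simp only [Fin.val_succ]; omega)
  have h00 : B c z (n+3) D 0 0 = z := by
    rw [B_apply]
    simp only [fin_val_zero0]
    rw [if_pos (by omega : (0:ℕ) < D)]
    simp [e]
  have h01 : B c z (n+3) D 0 (Fin.succ 0) = (starRingEnd ℂ) z := by
    rw [B_apply]
    simp only [Fin.val_succ, fin_val_zero0]
    rw [if_pos (by omega : (0:ℕ)+1 < D)]
    simp [e]
  have h02 : B c z (n+3) D 0 (Fin.succ 0).succ = (starRingEnd ℂ) c := by
    rw [B_apply]
    simp only [Fin.val_succ, fin_val_zero0]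
    rw [if_pos (by omega : (0:ℕ)+1+1 < D)]
    simp [e]
  have m0 : (B c z (n+3) D).submatrix Fin.succ (Fin.succAbove 0) = B c z (n+2) (D-1) := by
    funext i j
    simp only [Matrix.submatrix_apply, B_apply, succAbove_val, Fin.val_succ, fin_val_zero0]
    split_ifs <;> exact e_eqs c z _ _ _ _ 1 (by omega) (by omega)
  have hcol1 : ∀ i : Fin (n+2),
      ((B c z (n+3) D).submatrix Fin.succ (Fin.succ 0).succAbove) i 0
        = if (i:ℕ) = 0 then c else 0 := by
    intro i
    simp only [Matrix.submatrix_apply, B_apply, succAbove_val, Fin.val_succ, fin_val_zero0]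
    rw [if_pos (by omega : (0:ℕ) < 0+1), if_pos (by omega : (0:ℕ) < D)]
    exact e_col0 c z i
  have d1 : ((B c z (n+3) D).submatrix Fin.succ (Fin.succ 0).succAbove).det
      = c * (B c z (n+1) (D-2)).det := by
    rw [det_col0 _ c hcol1]
    congr 1
    congr 1
    funext i j
    simp only [Matrix.submatrix_apply, B_apply, succAbove_val, Fin.val_succ, fin_val_zero0]
    split_ifs <;> exact e_eqs c z _ _ _ _ 2 (by omega) (by omega)
  have hcol2 : ∀ i : Fin (n+2),
      ((B c z (n+3) D).submatrix Fin.succ (Fin.succ 0).succ.succAbove) i 0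
        = if (i:ℕ) = 0 then c else 0 := by
    intro i
    simp only [Matrix.submatrix_apply, B_apply, succAbove_val, Fin.val_succ, fin_val_zero0]
    rw [if_pos (by omega : (0:ℕ) < 0+1+1), if_pos (by omega : (0:ℕ) < D)]
    exact e_col0 c z i
  have hcol2' : ∀ i : Fin (n+1),
      (((B c z (n+3) D).submatrix Fin.succ (Fin.succ 0).succ.succAbove).submatrix
          Fin.succ Fin.succ) i 0
        = if (i:ℕ) = 0 then c else 0 := by
    intro i
    simp only [Matrix.submatrix_apply, B_apply, succAbove_val, Fin.val_succ, fin_val_zero0]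
    rw [if_pos (by omega : (0:ℕ)+1 < 0+1+1), if_pos (by omega : (0:ℕ)+1 < D)]
    exact e_col1 c z i
  have d2 : ((B c z (n+3) D).submatrix Fin.succ (Fin.succ 0).succ.succAbove).det
      = c * (c * (B c z n (D-3)).det) := by
    rw [det_col0 _ c hcol2]
    congr 1
    rw [det_col0 _ c hcol2']
    congr 1
    congr 1
    funext i j
    simp only [Matrix.submatrix_apply, B_apply, succAbove_val, Fin.val_succ, fin_val_zero0]
    split_ifs <;> exact e_eqs c z _ _ _ _ 3 (by omega) (by omega)
  simp only [hz, mul_zero, zero_mul, Finset.sum_const_zero, add_zero, h00, h01, h02, m0, d1, d2,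
    Fin.val_succ, fin_val_zero0]
  ring

noncomputable def dd (c z : ℂ) (M D : ℕ) : ℂ := (B c z M D).det

lemma dA (c z : ℂ) (n D : ℕ) (hD : 3 ≤ D) :
    dd c z (n+3) D = z * dd c z (n+2) (D-1) - (starRingEnd ℂ) z * c * dd c z (n+1) (D-2)
      + (starRingEnd ℂ) c * c^2 * dd c z n (D-3) := detB_A c z n D hD

lemma dB (c z : ℂ) (n : ℕ) :
    dd c z (n+2) 2 = z * dd c z (n+1) 1 - (starRingEnd ℂ) z * c * dd c z n 0 := detB_B c z n

lemma dC (c z : ℂ) (n : ℕ) :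
    dd c z (n+2) 1 = z * dd c z (n+1) 0 - (starRingEnd ℂ) c * c * dd c z n 0 := detB_C c z n

lemma dD (c z : ℂ) (n : ℕ) :
    dd c z (n+2) 0 = (starRingEnd ℂ) z * dd c z (n+1) 0 - (starRingEnd ℂ) c * dd c z (n+1) 1 :=
  detB_D c z n

lemma dd00 (c z : ℂ) (D : ℕ) : dd c z 0 D = 1 := Matrix.det_fin_zero

lemma dd10 (c z : ℂ) : dd c z 1 0 = (starRingEnd ℂ) z := by
  simp [dd, Matrix.det_fin_one, B_apply, e]

lemma dd11 (c z : ℂ) : dd c z 1 1 = z := by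
  simp [dd, Matrix.det_fin_one, B_apply, e]

lemma Gmain (c z : ℂ) : ∀ n : ℕ,
    dd c z (n+3) (n+2) = z * dd c z (n+2) (n+1) - c * dd c z (n+2) n
      - ((starRingEnd ℂ) c * c) * dd c z (n+1) (n+1) := by
  intro n
  induction n using Nat.strong_induction_on with
  | _ n ih =>
    match n, ih with
    | 0, _ =>
      have hB1 := dB c z 1
      have hC0 := dC c z 0
      have hD0 := dD c z 0
      norm_num at hB1 hC0 hD0 ⊢
      rw [hB1, hC0, hD0, dd11, dd10, dd00]
      ring
    | 1, _ =>
      have hA13 := dA c z 1 3 (by omega)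
      have hB1 := dB c z 1
      have hC1 := dC c z 1
      have hB0 := dB c z 0
      have hC0 := dC c z 0
      have hD0 := dD c z 0
      norm_num at hA13 hB1 hC1 hB0 hC0 hD0 ⊢
      rw [hA13, hB1, hC1, hB0, hC0, hD0, dd11, dd10, dd00]
      ring
    | 2, _ =>
      have hA24 := dA c z 2 4 (by omega)
      have hA13 := dA c z 1 3 (by omega)
      have hA03 := dA c z 0 3 (by omega)
      have hB2 := dB c z 2
      have hB1 := dB c z 1
      have hC1 := dC c z 1
      have hB0 := dB c z 0
      have hC0 := dC c z 0
      have hD0 := dD c z 0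
      norm_num at hA24 hA13 hA03 hB2 hB1 hC1 hB0 hC0 hD0 ⊢
      rw [hA24, hA13, hA03, hB2, hB1, hC1, hB0, hC0, hD0, dd11, dd10, dd00]
      ring
    | (k+3), ih =>
      have ih0 := ih k (by omega)
      have ih1 := ih (k+1) (by omega)
      have ih2 := ih (k+2) (by omega)
      rw [show k+1+3 = k+4 by omega, show k+1+2 = k+3 by omega, show k+1+1 = k+2 by omega] at ih1
      rw [show k+2+3 = k+5 by omega, show k+2+2 = k+4 by omega, show k+2+1 = k+3 by omega] at ih2
      have hA1 := dA c z (k+3) (k+5) (by omega)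
      have hA2 := dA c z (k+2) (k+4) (by omega)
      have hA3 := dA c z (k+2) (k+3) (by omega)
      have hA4 := dA c z (k+1) (k+4) (by omega)
      rw [show k+3+3 = k+6 by omega, show k+3+2 = k+5 by omega, show k+3+1 = k+4 by omega,
        show k+5-1 = k+4 by omega, show k+5-2 = k+3 by omega, show k+5-3 = k+2 by omega] at hA1
      rw [show k+2+3 = k+5 by omega, show k+2+2 = k+4 by omega, show k+2+1 = k+3 by omega,
        show k+4-1 = k+3 by omega, show k+4-2 = k+2 by omega, show k+4-3 = k+1 by omega] at hA2
      rw [show k+2+3 = k+5 by omega, show k+2+2 = k+4 by omega, show k+2+1 = k+3 by omega,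
        show k+3-1 = k+2 by omega, show k+3-2 = k+1 by omega, show k+3-3 = k by omega] at hA3
      rw [show k+1+3 = k+4 by omega, show k+1+2 = k+3 by omega, show k+1+1 = k+2 by omega,
        show k+4-1 = k+3 by omega, show k+4-2 = k+2 by omega, show k+4-3 = k+1 by omega] at hA4
      rw [show k+3+3 = k+6 by omega, show k+3+2 = k+5 by omega, show k+3+1 = k+4 by omega]
      linear_combination hA1 - z*hA2 + c*hA3 + ((starRingEnd ℂ) c * c)*hA4 + z*ih2
        - ((starRingEnd ℂ) z * c)*ih1 + ((starRingEnd ℂ) c * c^2)*ih0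

lemma Pdet_eq (c z : ℂ) (m k : ℤ) (h0 : 0 ≤ m) (h1 : 0 ≤ k) (h2 : k ≤ m) :
    Pdet c z m k = dd c z m.toNat (m-k).toNat := by
  rw [Pdet, dif_pos ⟨h0, h1, h2⟩]
  show _ = (B c z m.toNat (m-k).toNat).det
  congr 1
  funext i j
  show Amc c z m.toNat i (Fin.succAbove ⟨(m - k).toNat, _⟩ j) = _
  have hA : ∀ (i' : Fin m.toNat) (j' : Fin (m.toNat + 1)),
      Amc c z m.toNat i' j' = e c z (i' : ℕ) (j' : ℕ) := fun _ _ => rfl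
  rw [hA, B_apply, succAbove_val]

end Stmt9Aux

open Stmt9Aux in
/-- `P^m_1 = z·P^{m−1}_1 − c·P^{m−1}_2 − |c|²·P^{m−2}_0` for all `m ≥ 2`. -/
theorem stmt9 (c z : ℂ) (m : ℤ) (hm : 2 ≤ m) :
    Pdet c z m 1 = z * Pdet c z (m - 1) 1 - c * Pdet c z (m - 1) 2 -
      (Complex.normSq c : ℂ) * Pdet c z (m - 2) 0 := by
  have hns : ((Complex.normSq c : ℝ) : ℂ) = (starRingEnd ℂ) c * c := by
    rw [← Complex.normSq_eq_conj_mul_self]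
  rcases eq_or_lt_of_le hm with h2 | h3
  · subst h2
    have hP21 : Pdet c z 2 1 = dd c z 2 1 := by
      rw [Pdet_eq c z 2 1 (by omega) (by omega) (by omega)]
      norm_num
      try rfl
    have hP11 : Pdet c z (2-1) 1 = dd c z 1 0 := by
      rw [Pdet_eq c z (2-1) 1 (by omega) (by omega) (by omega)]
      norm_num
      try rfl
    have hP12 : Pdet c z (2-1) 2 = 0 := by rw [Pdet, dif_neg (by omega)]
    have hP00 : Pdet c z (2-2) 0 = dd c z 0 0 := by
      rw [Pdet_eq c z (2-2) 0 (by omega) (by omega) (by omega)]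
      norm_num
      try rfl
    have hC0 := dC c z 0
    norm_num at hC0
    rw [hP21, hP11, hP12, hP00, hC0, dd00, dd10, hns]
    ring
  · obtain ⟨n, hn⟩ : ∃ n : ℕ, m = (n : ℤ) + 3 := ⟨(m-3).toNat, by omega⟩
    subst hn
    have e1 : Pdet c z ((n:ℤ)+3) 1 = dd c z (n+3) (n+2) := by
      rw [Pdet_eq c z _ _ (by omega) (by omega) (by omega),
        show ((n:ℤ)+3).toNat = n+3 by omega, show ((n:ℤ)+3-1).toNat = n+2 by omega]
    have e2 : Pdet c z ((n:ℤ)+3-1) 1 = dd c z (n+2) (n+1) := by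
      rw [Pdet_eq c z _ _ (by omega) (by omega) (by omega),
        show ((n:ℤ)+3-1).toNat = n+2 by omega, show ((n:ℤ)+3-1-1).toNat = n+1 by omega]
    have e3 : Pdet c z ((n:ℤ)+3-1) 2 = dd c z (n+2) n := by
      rw [Pdet_eq c z _ _ (by omega) (by omega) (by omega),
        show ((n:ℤ)+3-1).toNat = n+2 by omega, show ((n:ℤ)+3-1-2).toNat = n by omega]
    have e4 : Pdet c z ((n:ℤ)+3-2) 0 = dd c z (n+1) (n+1) := by
      rw [Pdet_eq c z _ _ (by omega) (by omega) (by omega),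
        show ((n:ℤ)+3-2).toNat = n+1 by omega, show ((n:ℤ)+3-2-0).toNat = n+1 by omega]
    rw [e1, e2, e3, e4, hns]
    linear_combination Gmain c z n
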